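/- arXiv:2011.02015 — 2 statements merged into one kernel-verified Lean document; each statement's English description precedes it below -/
import Mathlib

section
/- Let G be a finite simple graph, m a matching on F(G), and e ∈ m. Then J(m) − 1 ≤ J(m \ {e}) ≤ J(m); that is, removing a single edge from a matching on the face poset of a graph decreases the number of induced oriented cycles by at most one. -/
/-- The arc relation of the face poset of a finite abstract simplicial complex `X`
(given as a finite family of finite faces): an arc from `σ` down to `τ` whenever
`τ` is a codimension-one face of `σ`. -/
def FaceArc {V : Type*} (X : Finset (Finset V)) (σ τ : Finset V) : Prop :=
  σ ∈ X ∧ τ ∈ X ∧ τ ⊂ σ ∧ τ.card + 1 = σ.card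

/-- The arc relation of the face poset of a simple graph `G`, regarded as a
1-dimensional simplicial complex: an arc from each edge-face `{u, v}` down to
each of its endpoint vertex-faces. -/
def GraphArc {V : Type*} [DecidableEq V] (G : SimpleGraph V) (σ τ : Finset V) : Prop :=
  ∃ u v : V, G.Adj u v ∧ σ = {u, v} ∧ (τ = {u} ∨ τ = {v})

/-- A matching on the digraph with arc relation `A`: a finite set of arcs,
no two of which share an endpoint. -/
def IsMatching {α : Type*} (A : α → α → Prop) (m : Finset (α × α)) : Prop :=
  (∀ p ∈ m, A p.1 p.2) ∧
    ∀ p ∈ m, ∀ q ∈ m, p ≠ q →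
      p.1 ≠ q.1 ∧ p.1 ≠ q.2 ∧ p.2 ≠ q.1 ∧ p.2 ≠ q.2

/-- The arc relation of the digraph obtained from the digraph with arc relation `A`
by reversing the arcs belonging to `m`. -/
def MStep {α : Type*} (A : α → α → Prop) (m : Finset (α × α)) (a b : α) : Prop :=
  (A a b ∧ (a, b) ∉ m) ∨ (A b a ∧ (b, a) ∈ m)

/-- `IsCycleList R l` says the nonempty list `l` of pairwise distinct vertices is a
directed cycle of the digraph with arc relation `R` (consecutive steps, closing up). -/
def IsCycleList {α : Type*} (R : α → α → Prop) : List α → Prop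
  | [] => False
  | a :: l => (a :: l).Nodup ∧ List.Chain R a (l ++ [a])

/-- The set of oriented cycles induced by the matching `m` on the digraph with arc
relation `A` (as lists of vertices; rotated lists represent the same cycle). -/
def cyclesOf {α : Type*} (A : α → α → Prop) (m : Finset (α × α)) : Set (List α) :=
  {l | IsCycleList (MStep A m) l}

/-- `numCycles A m` is `J(m)`, the number of oriented cycles induced by `m`
(cycle lists counted up to rotation). -/
noncomputable def numCycles {α : Type*} (A : α → α → Prop) (m : Finset (α × α)) : ℕ :=
  (Quotient.mk (List.IsRotated.setoid α) '' cyclesOf A m).ncard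
section Helpers

variable {α : Type*}

/-- Every element of `l` is a target of some step of the chain. -/
lemma chain_targets {R : α → α → Prop} :
    ∀ (a : α) (l : List α), List.Chain R a l → ∀ x ∈ l, ∃ p, R p x := by
  intro a l
  induction l generalizing a with
  | nil => intro _ x hx; simp at hx
  | cons b l ih =>
    intro h x hx
    simp only [List.Chain, List.isChain_cons_cons] at h
    rw [List.mem_cons] at hx
    rcases hx with rfl | hx
    · exact ⟨a, h.1⟩
    · exact ih b h.2 x hx

/-- A chain is preserved under a relation implication that only needs to hold
at sources belonging to the chain. -/
lemma chain_mono_mem {R R' : α → α → Prop} :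
    ∀ (a : α) (l : List α), (∀ x ∈ a :: l, ∀ y, R x y → R' x y) →
      List.Chain R a l → List.Chain R' a l := by
  intro a l
  induction l generalizing a with
  | nil => intro _ _; exact List.Chain.nil
  | cons b l ih =>
    intro hx h
    simp only [List.Chain, List.isChain_cons_cons] at h ⊢
    refine ⟨hx a (by simp) b h.1, ih b ?_ h.2⟩
    intro x hmem y hR
    exact hx x (by rcases List.mem_cons.1 hmem with rfl | hmem <;> simp [hmem]) y hR

/-- In a functional relation, chains to a fixed endpoint from a fixed start are unique. -/
lemma chain_eq_of_functional {R : α → α → Prop}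
    (hR : ∀ a b c, R a b → R a c → b = c) :
    ∀ (t1 t2 : List α) (a z : α), List.Chain R a (t1 ++ [z]) →
      List.Chain R a (t2 ++ [z]) → z ∉ t1 → z ∉ t2 → t1 = t2 := by
  intro t1
  induction t1 with
  | nil =>
    intro t2 a z h1 h2 _ hz2
    cases t2 with
    | nil => rfl
    | cons b t2 =>
      exfalso
      simp only [List.nil_append, List.cons_append, List.Chain, List.isChain_cons_cons] at h1 h2
      have : b = z := hR a b z h2.1 h1.1
      exact hz2 (by simp [this])
  | cons b t1 ih =>
    intro t2 a z h1 h2 hz1 hz2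
    cases t2 with
    | nil =>
      exfalso
      simp only [List.nil_append, List.cons_append, List.Chain, List.isChain_cons_cons] at h1 h2
      have : b = z := hR a b z h1.1 h2.1
      exact hz1 (by simp [this])
    | cons c t2 =>
      simp only [List.cons_append, List.Chain, List.isChain_cons_cons] at h1 h2
      have hbc : b = c := hR a b c h1.1 h2.1
      subst hbc
      have := ih t2 b z h1.2 h2.2 (fun h => hz1 (List.mem_cons_of_mem _ h))
        (fun h => hz2 (List.mem_cons_of_mem _ h))
      rw [this]

/-- `IsCycleList` is invariant under rotation. -/
lemma IsCycleList.of_rotated {R : α → α → Prop} {l l' : List α}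
    (hrot : l ~r l') (h : IsCycleList R l) : IsCycleList R l' := by
  cases l with
  | nil => exact absurd h (by simp [IsCycleList])
  | cons a t =>
    obtain ⟨hnd, hch⟩ := h
    cases l' with
    | nil =>
      have := hrot.perm.length_eq
      simp at this
    | cons b t' =>
      refine ⟨(hrot.nodup_iff).1 hnd, ?_⟩
      have h1 : Cycle.Chain R ↑(a :: t) := (Cycle.chain_coe_cons R a t).2 hch
      have h2 : (↑(a :: t) : Cycle α) = ↑(b :: t') := Cycle.coe_eq_coe.2 hrot
      rw [h2] at h1
      exact (Cycle.chain_coe_cons R b t').1 h1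

lemma exists_rotated_head {l : List α} {x : α} (hx : x ∈ l) :
    ∃ t, l ~r (x :: t) := by
  obtain ⟨s, t, rfl⟩ := List.append_of_mem hx
  exact ⟨t ++ s, by simpa using (List.isRotated_append : s ++ (x :: t) ~r (x :: t) ++ s)⟩


lemma mem_src_of_cycle {x a : α} {t : List α} (hx : x ∈ a :: (t ++ [a])) : x ∈ a :: t := by
  simp only [List.mem_cons, List.mem_append, List.mem_singleton] at hx ⊢
  tauto

end Helpers

section GraphFacts

variable {V : Type*} [DecidableEq V] {G : SimpleGraph V}

lemma graphArc_cards {σ τ : Finset V} (h : GraphArc G σ τ) :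
    σ.card = 2 ∧ τ.card = 1 ∧ ∃ x ∈ σ, τ = {x} := by
  obtain ⟨u, v, hadj, rfl, hτ⟩ := h
  have hne : u ≠ v := G.ne_of_adj hadj
  refine ⟨Finset.card_pair hne, ?_, ?_⟩
  · rcases hτ with rfl | rfl <;> simp
  · rcases hτ with rfl | rfl
    · exact ⟨u, by simp⟩
    · exact ⟨v, by simp⟩

variable {m : Finset (Finset V × Finset V)}

/-- Successor uniqueness at any element having a predecessor. -/
lemma msucc_unique (hm : IsMatching (GraphArc G) m) {a b c : Finset V}
    (hab : MStep (GraphArc G) m a b) (hac : MStep (GraphArc G) m a c)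
    (hpred : ∃ p, MStep (GraphArc G) m p a) : b = c := by
  obtain ⟨hma, hdisj⟩ := hm
  rcases hab with ⟨hAab, hnab⟩ | ⟨hAba, hba⟩
  · rcases hac with ⟨hAac, hnac⟩ | ⟨hAca, hca⟩
    swap
    · have h1 : a.card = 1 := (graphArc_cards hAca).2.1
      have h2 : a.card = 2 := (graphArc_cards hAab).1
      rw [h1] at h2; exact absurd h2 (by norm_num)
    · -- both forward: a is an edge
      have ha2 : a.card = 2 := (graphArc_cards hAab).1
      obtain ⟨x, hxa, rfl⟩ := (graphArc_cards hAab).2.2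
      obtain ⟨y, hya, rfl⟩ := (graphArc_cards hAac).2.2
      -- predecessor of a must be a reversed matched arc (a, {z}) ∈ m
      obtain ⟨p, hp⟩ := hpred
      rcases hp with ⟨hApa, _⟩ | ⟨hAap, hap⟩
      · have := (graphArc_cards hApa).2.1
        rw [ha2] at this; exact absurd this (by norm_num)
      · obtain ⟨z, hza, rfl⟩ := (graphArc_cards hAap).2.2
        -- x ≠ z and y ≠ z, all in the 2-element set a
        have hxz : x ≠ z := by
          rintro rfl; exact hnab hap
        have hyz : y ≠ z := by
          rintro rfl; exact hnac hap
        obtain ⟨u, v, hadj, rfl, _⟩ := hAab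
        simp only [Finset.mem_insert, Finset.mem_singleton] at hxa hya hza
        rcases hza with rfl | rfl
        · rcases hxa with rfl | rfl
          · exact absurd rfl hxz
          · rcases hya with rfl | rfl
            · exact absurd rfl hyz
            · rfl
        · rcases hxa with rfl | rfl
          · rcases hya with rfl | rfl
            · rfl
            · exact absurd rfl hyz
          · exact absurd rfl hxz
  · rcases hac with ⟨hAac, hnac⟩ | ⟨hAca, hca⟩
    · -- mixed: a has card 1 and card 2
      have h1 : a.card = 1 := (graphArc_cards hAba).2.1
      have h2 : a.card = 2 := (graphArc_cards hAac).1
      rw [h1] at h2; exact absurd h2 (by norm_num)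
    · -- both reversed matched arcs into a
      by_contra hbc
      have hne : (b, a) ≠ (c, a) := fun h => hbc (congrArg Prod.fst h)
      exact (hdisj _ hba _ hca hne).2.2.2 rfl

end GraphFacts
/-- for a simple graph `G`, removing one arc from a matching on `F(G)`
decreases the number of induced oriented cycles by at most one:
`J(m) − 1 ≤ J(m \ {e}) ≤ J(m)`. -/
theorem erase_decreases_J_by_at_most_one {V : Type*} [Fintype V] [DecidableEq V]
    (G : SimpleGraph V)
    (m : Finset (Finset V × Finset V)) (hm : IsMatching (GraphArc G) m)
    (e : Finset V × Finset V) (he : e ∈ m) :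
    numCycles (GraphArc G) (m.erase e) ≤ numCycles (GraphArc G) m ∧
    numCycles (GraphArc G) m ≤ numCycles (GraphArc G) (m.erase e) + 1 := by
  classical
  obtain ⟨hma, hdisj⟩ := id hm
  have hAe : GraphArc G e.1 e.2 := hma e he
  have hstep_of_erase : ∀ x y, x ≠ e.1 →
      MStep (GraphArc G) (m.erase e) x y → MStep (GraphArc G) m x y := by
    intro x y hx h
    rcases h with ⟨hA, hn⟩ | ⟨hA, hmem⟩
    · left
      refine ⟨hA, fun hmem => ?_⟩
      have : (x, y) = e := by
        by_contra hne
        exact hn (Finset.mem_erase.2 ⟨hne, hmem⟩)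
      exact hx (congrArg Prod.fst this)
    · exact Or.inr ⟨hA, (Finset.mem_erase.1 hmem).2⟩
  have hstep_of_m : ∀ x y, x ≠ e.2 →
      MStep (GraphArc G) m x y → MStep (GraphArc G) (m.erase e) x y := by
    intro x y hx h
    rcases h with ⟨hA, hn⟩ | ⟨hA, hmem⟩
    · exact Or.inl ⟨hA, fun hc => hn (Finset.mem_erase.1 hc).2⟩
    · right
      refine ⟨hA, Finset.mem_erase.2 ⟨fun hc => ?_, hmem⟩⟩
      exact hx (congrArg Prod.snd hc)
  -- e.1 has no predecessor in the erased digraph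
  have hno_pred : ∀ p, ¬ MStep (GraphArc G) (m.erase e) p e.1 := by
    intro p hp
    rcases hp with ⟨hA, _⟩ | ⟨hA, hmem⟩
    · have h1 : (e.1).card = 1 := (graphArc_cards hA).2.1
      have h2 : (e.1).card = 2 := (graphArc_cards hAe).1
      rw [h1] at h2; exact absurd h2 (by norm_num)
    · obtain ⟨hne, hmem'⟩ := Finset.mem_erase.1 hmem
      exact (hdisj _ hmem' _ he hne).1 rfl
  -- every cycle of the erased matching is a cycle of m
  have hSS : cyclesOf (GraphArc G) (m.erase e) ⊆ cyclesOf (GraphArc G) m := by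
    intro l hl
    cases l with
    | nil => exact absurd hl (by simp [cyclesOf, IsCycleList])
    | cons a t =>
      obtain ⟨hnd, hch⟩ := hl
      have hnot : e.1 ∉ a :: t := by
        intro hmem
        have hmem' : e.1 ∈ t ++ [a] := by
          rcases List.mem_cons.1 hmem with rfl | h
          · simp
          · simp [h]
        obtain ⟨p, hp⟩ := chain_targets a (t ++ [a]) hch e.1 hmem'
        exact hno_pred p hp
      refine ⟨hnd, chain_mono_mem a (t ++ [a]) ?_ hch⟩
      intro x hx y hR
      have hxl : x ∈ a :: t := mem_src_of_cycle hx
      exact hstep_of_erase x y (fun hc => hnot (hc ▸ hxl)) hR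
  -- a cycle of m that is not a cycle of the erased matching contains e.2
  have hlost : ∀ l ∈ cyclesOf (GraphArc G) m,
      l ∉ cyclesOf (GraphArc G) (m.erase e) → e.2 ∈ l := by
    intro l hl hnl
    by_contra hmem
    apply hnl
    cases l with
    | nil => exact absurd hl (by simp [cyclesOf, IsCycleList])
    | cons a t =>
      obtain ⟨hnd, hch⟩ := hl
      refine ⟨hnd, chain_mono_mem a (t ++ [a]) ?_ hch⟩
      intro x hx y hR
      have hxl : x ∈ a :: t := mem_src_of_cycle hx
      exact hstep_of_m x y (fun hc => hmem (hc ▸ hxl)) hR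
  -- two cycles of m through e.2 are rotations of each other
  have huniq : ∀ l ∈ cyclesOf (GraphArc G) m, ∀ l' ∈ cyclesOf (GraphArc G) m,
      e.2 ∈ l → e.2 ∈ l' → l ~r l' := by
    -- restricted, functional relation
    set R' : Finset V → Finset V → Prop :=
      fun x y => MStep (GraphArc G) m x y ∧ ∃ p, MStep (GraphArc G) m p x with hR'
    have hfun : ∀ a b c, R' a b → R' a c → b = c := by
      intro a b c h1 h2
      exact msucc_unique hm h1.1 h2.1 h1.2
    have key : ∀ l ∈ cyclesOf (GraphArc G) m, ∀ t, l = e.2 :: t →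
        List.Chain R' e.2 (t ++ [e.2]) ∧ e.2 ∉ t := by
      intro l hl t hlt
      subst hlt
      obtain ⟨hnd, hch⟩ := hl
      constructor
      · refine chain_mono_mem _ _ ?_ hch
        intro x hx y hRxy
        refine ⟨hRxy, ?_⟩
        have hxl : x ∈ t ++ [e.2] := by
          have := mem_src_of_cycle hx
          simp only [List.mem_cons, List.mem_append, List.mem_singleton] at this ⊢
          tauto
        exact chain_targets _ _ hch x hxl
      · exact (List.nodup_cons.1 hnd).1
    intro l hl l' hl' hel hel'
    obtain ⟨t1, hrot1⟩ := exists_rotated_head hel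
    obtain ⟨t2, hrot2⟩ := exists_rotated_head hel'
    have hc1 : (e.2 :: t1) ∈ cyclesOf (GraphArc G) m := IsCycleList.of_rotated hrot1 hl
    have hc2 : (e.2 :: t2) ∈ cyclesOf (GraphArc G) m := IsCycleList.of_rotated hrot2 hl'
    obtain ⟨hch1, hz1⟩ := key _ hc1 t1 rfl
    obtain ⟨hch2, hz2⟩ := key _ hc2 t2 rfl
    have : t1 = t2 := chain_eq_of_functional hfun t1 t2 e.2 e.2 hch1 hch2 hz1 hz2
    exact hrot1.trans (this ▸ hrot2.symm)
  -- finiteness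
  have hfinS : (cyclesOf (GraphArc G) m).Finite := by
    apply Set.Finite.subset (List.finite_length_le (Finset V) (Fintype.card (Finset V)))
    intro l hl
    cases l with
    | nil => exact absurd hl (by simp [cyclesOf, IsCycleList])
    | cons a t => exact hl.1.length_le_card
  have hfinImg : (Quotient.mk (List.IsRotated.setoid (Finset V)) ''
      cyclesOf (GraphArc G) m).Finite := hfinS.image _
  constructor
  · exact Set.ncard_le_ncard (Set.image_mono  hSS) hfinImg
  · by_cases hsub : (Quotient.mk (List.IsRotated.setoid (Finset V)) ''
        cyclesOf (GraphArc G) m) ⊆ (Quotient.mk (List.IsRotated.setoid (Finset V)) ''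
        cyclesOf (GraphArc G) (m.erase e))
    · have := Set.ncard_le_ncard hsub (hfinImg.subset (Set.image_mono  hSS))
      unfold numCycles
      omega
    · obtain ⟨q, hqS, hqS'⟩ := Set.not_subset.1 hsub
      have hsub2 : (Quotient.mk (List.IsRotated.setoid (Finset V)) ''
          cyclesOf (GraphArc G) m) ⊆ insert q (Quotient.mk (List.IsRotated.setoid (Finset V)) ''
          cyclesOf (GraphArc G) (m.erase e)) := by
        intro q' hq'
        by_cases h' : q' ∈ (Quotient.mk (List.IsRotated.setoid (Finset V)) ''
            cyclesOf (GraphArc G) (m.erase e))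
        · exact Set.mem_insert_iff.2 (Or.inr h')
        · obtain ⟨l, hl, rfl⟩ := hqS
          obtain ⟨l', hl', rfl⟩ := hq'
          have hel : e.2 ∈ l := hlost l hl (fun hc => hqS' ⟨l, hc, rfl⟩)
          have hel' : e.2 ∈ l' := hlost l' hl' (fun hc => h' ⟨l', hc, rfl⟩)
          exact Set.mem_insert_iff.2 (Or.inl (Quotient.sound (huniq l' hl' l hl hel' hel)))
      calc numCycles (GraphArc G) m
          ≤ (insert q (Quotient.mk (List.IsRotated.setoid (Finset V)) ''
              cyclesOf (GraphArc G) (m.erase e))).ncard :=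
            Set.ncard_le_ncard hsub2 ((hfinImg.subset (Set.image_mono  hSS)).insert q)
        _ ≤ numCycles (GraphArc G) (m.erase e) + 1 := Set.ncard_insert_le _ _
end

section
/- For every n, the maximum number of pairwise vertex-disjoint cycles in the complete graph K_n on n vertices equals ⌊n/3⌋; equivalently, η(K_n) = ⌊n/3⌋. -/
section CycleLemmas
variable {α : Type*} {R : α → α → Prop}

lemma chain_last_rel : ∀ (t : List α) (y z : α), List.Chain R y (t ++ [z]) → ∃ c, R c z
  | [], y, z, h => ⟨y, (List.chain_cons.1 h).1⟩
  | b :: t, _, z, h => chain_last_rel t b z (List.chain_cons.1 h).2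

lemma cycle_mem_rel : ∀ (t : List α) (y z : α), List.Chain R y (t ++ [z]) →
    ∀ x ∈ y :: t, ∃ w, R x w := by
  intro t
  induction t with
  | nil =>
    intro y z h x hx
    rw [List.mem_singleton] at hx
    subst hx
    exact ⟨z, (List.chain_cons.1 h).1⟩
  | cons b t' ih =>
    intro y z h x hx
    rcases List.mem_cons.1 hx with rfl | hx
    · exact ⟨b, (List.chain_cons.1 h).1⟩
    · exact ih b z (List.chain_cons.1 h).2 x hx

lemma chain_unique (hdet : ∀ a b b', (∃ c, R c a) → R a b → R a b' → b = b') :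
    ∀ (t1 t2 : List α) (y z : α), (∃ c, R c y) → z ∉ t1 → z ∉ t2 →
      List.Chain R y (t1 ++ [z]) → List.Chain R y (t2 ++ [z]) → t1 = t2 := by
  intro t1
  induction t1 with
  | nil =>
    intro t2 y z hin h1 h2 hc1 hc2
    cases t2 with
    | nil => rfl
    | cons b t2' =>
      exfalso
      have hyz : R y z := (List.chain_cons.1 hc1).1
      have hyb : R y b := (List.chain_cons.1 hc2).1
      exact h2 (by rw [← hdet y b z hin hyb hyz]; exact List.mem_cons_self)
  | cons b t1' ih =>
    intro t2 y z hin h1 h2 hc1 hc2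
    have hyb : R y b := (List.chain_cons.1 hc1).1
    cases t2 with
    | nil =>
      exfalso
      have hyz : R y z := (List.chain_cons.1 hc2).1
      have hbz : b = z := hdet y b z hin hyb hyz
      exact h1 (hbz ▸ List.mem_cons_self (a := b) (l := t1'))
    | cons b2 t2' =>
      have hyb2 : R y b2 := (List.chain_cons.1 hc2).1
      have hb : b2 = b := hdet y b2 b hin hyb2 hyb
      subst hb
      have := ih t2' b2 z ⟨y, hyb2⟩ (fun h => h1 (List.mem_cons_of_mem _ h))
        (fun h => h2 (List.mem_cons_of_mem _ h))
        (List.chain_cons.1 hc1).2 (List.chain_cons.1 hc2).2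
      rw [this]

lemma isCycleList_rotate_one {a : α} {t : List α} (h : IsCycleList R (a :: t)) :
    IsCycleList R (t ++ [a]) := by
  obtain ⟨hnd, hch⟩ := h
  cases t with
  | nil => exact ⟨hnd, hch⟩
  | cons b t' =>
    obtain ⟨hab, hch'⟩ := List.chain_cons.1 hch
    refine ⟨(List.perm_append_singleton _ _).nodup_iff.2 hnd, ?_⟩
    show List.Chain R b ((t' ++ [a]) ++ [b])
    rw [List.append_assoc]
    exact List.isChain_cons_split.2 ⟨hch', List.isChain_pair.2 hab⟩

lemma isCycleList_rotate : ∀ (k : ℕ) (l : List α), IsCycleList R l → IsCycleList R (l.rotate k) := by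
  intro k
  induction k with
  | zero => intro l h; simpa using h
  | succ k ih =>
    intro l h
    cases l with
    | nil => exact absurd h id
    | cons a t =>
      rw [List.rotate_cons_succ]
      exact ih _ (isCycleList_rotate_one h)

lemma isCycleList_of_isRotated {l l' : List α} (h : IsCycleList R l) (hr : l.IsRotated l') :
    IsCycleList R l' := by
  obtain ⟨k, rfl⟩ := hr
  exact isCycleList_rotate k l h

lemma cycle_eq_of_head (hdet : ∀ a b b', (∃ c, R c a) → R a b → R a b' → b = b')
    {a : α} {t1 t2 : List α} (h1 : IsCycleList R (a :: t1)) (h2 : IsCycleList R (a :: t2)) :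
    a :: t1 = a :: t2 := by
  obtain ⟨hnd1, hc1⟩ := h1
  obtain ⟨hnd2, hc2⟩ := h2
  have hin : ∃ c, R c a := chain_last_rel t1 a a hc1
  rw [chain_unique hdet t1 t2 a a hin (List.nodup_cons.1 hnd1).1 (List.nodup_cons.1 hnd2).1 hc1 hc2]

lemma cycle_isRotated_of_mem (hdet : ∀ a b b', (∃ c, R c a) → R a b → R a b' → b = b')
    {l1 l2 : List α} {x : α} (h1 : IsCycleList R l1) (h2 : IsCycleList R l2)
    (hx1 : x ∈ l1) (hx2 : x ∈ l2) : l1.IsRotated l2 := by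
  obtain ⟨s1, t1, rfl⟩ := List.append_of_mem hx1
  obtain ⟨s2, t2, rfl⟩ := List.append_of_mem hx2
  have r1 : (s1 ++ x :: t1).IsRotated (x :: (t1 ++ s1)) := by
    simpa using (List.isRotated_append (l := s1) (l' := x :: t1))
  have r2 : (s2 ++ x :: t2).IsRotated (x :: (t2 ++ s2)) := by
    simpa using (List.isRotated_append (l := s2) (l' := x :: t2))
  have c1 := isCycleList_of_isRotated h1 r1
  have c2 := isCycleList_of_isRotated h2 r2
  have heq := cycle_eq_of_head hdet c1 c2
  exact r1.trans (heq ▸ r2.symm)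

end CycleLemmas

section ArcLemmas
variable {V : Type*} [DecidableEq V] {G : SimpleGraph V} {m : Finset (Finset V × Finset V)}

lemma graphArc_card {σ τ : Finset V} (h : GraphArc G σ τ) :
    σ.card = 2 ∧ τ.card = 1 ∧ τ ⊆ σ := by
  obtain ⟨u, v, huv, rfl, hτ⟩ := h
  have hne := G.ne_of_adj huv
  refine ⟨Finset.card_pair hne, ?_, ?_⟩ <;>
    rcases hτ with rfl | rfl <;> simp [Finset.singleton_subset_iff]

lemma singleton_subset_pair {σ b b' t : Finset V} (hσ : σ.card = 2)
    (hb : b ⊆ σ) (hb1 : b.card = 1) (hb' : b' ⊆ σ) (hb'1 : b'.card = 1)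
    (ht : t ⊆ σ) (ht1 : t.card = 1) (hbt : b ≠ t) (hb't : b' ≠ t) : b = b' := by
  obtain ⟨u, v, huv, rfl⟩ := Finset.card_eq_two.1 hσ
  obtain ⟨x, rfl⟩ := Finset.card_eq_one.1 hb1
  obtain ⟨y, rfl⟩ := Finset.card_eq_one.1 hb'1
  obtain ⟨z, rfl⟩ := Finset.card_eq_one.1 ht1
  have hx := Finset.singleton_subset_iff.1 hb
  have hy := Finset.singleton_subset_iff.1 hb'
  have hz := Finset.singleton_subset_iff.1 ht
  simp only [Finset.mem_insert, Finset.mem_singleton] at hx hy hz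
  have hbt' : x ≠ z := fun h => hbt (by rw [h])
  have hb't' : y ≠ z := fun h => hb't (by rw [h])
  rcases hx with rfl | rfl <;> rcases hy with rfl | rfl <;> rcases hz with h | h <;>
    simp_all

lemma mstep_cases {a b : Finset V} (h : MStep (GraphArc G) m a b) :
    (a.card = 2 ∧ b.card = 1 ∧ b ⊆ a ∧ (a, b) ∉ m) ∨
    (a.card = 1 ∧ b.card = 2 ∧ a ⊆ b ∧ (b, a) ∈ m) := by
  rcases h with ⟨h, hmm⟩ | ⟨h, hmm⟩
  · obtain ⟨h2, h1, hsub⟩ := graphArc_card h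
    exact Or.inl ⟨h2, h1, hsub, hmm⟩
  · obtain ⟨h2, h1, hsub⟩ := graphArc_card h
    exact Or.inr ⟨h1, h2, hsub, hmm⟩

lemma mstep_ne {a b : Finset V} (h : MStep (GraphArc G) m a b) : a ≠ b := by
  rintro rfl
  rcases mstep_cases h with ⟨h2, h1, _⟩ | ⟨h1, h2, _⟩ <;> omega

lemma matching_right_unique {A : Finset V → Finset V → Prop} (hm : IsMatching A m)
    {σ σ' τ : Finset V} (h1 : (σ, τ) ∈ m) (h2 : (σ', τ) ∈ m) : σ = σ' := by
  by_contra hne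
  exact (hm.2 _ h1 _ h2 (fun h => hne (congrArg Prod.fst h))).2.2.2 rfl

lemma matching_left_unique {A : Finset V → Finset V → Prop} (hm : IsMatching A m)
    {σ τ τ' : Finset V} (h1 : (σ, τ) ∈ m) (h2 : (σ, τ') ∈ m) : τ = τ' := by
  by_contra hne
  exact (hm.2 _ h1 _ h2 (fun h => hne (congrArg Prod.snd h))).1 rfl

lemma mstep_det (hm : IsMatching (GraphArc G) m) :
    ∀ a b b', (∃ c, MStep (GraphArc G) m c a) → MStep (GraphArc G) m a b →
      MStep (GraphArc G) m a b' → b = b' := by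
  rintro a b b' ⟨c, hc⟩ h1 h2
  rcases mstep_cases h1 with ⟨ha2, hb1, hbs, hbm⟩ | ⟨ha1, hb2, hbs, hbm⟩
  · rcases mstep_cases hc with ⟨_, ha1, _, _⟩ | ⟨hc1, _, hcs, hcm⟩
    · omega
    · rcases mstep_cases h2 with ⟨_, hb'1, hb's, hb'm⟩ | ⟨ha1', _, _, _⟩
      · refine singleton_subset_pair ha2 hbs hb1 hb's hb'1 hcs hc1 ?_ ?_
        · rintro rfl; exact hbm hcm
        · rintro rfl; exact hb'm hcm
      · omega
  · rcases mstep_cases h2 with ⟨ha2', _, _, _⟩ | ⟨_, _, _, hb'm⟩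
    · omega
    · exact matching_right_unique hm hbm hb'm

end ArcLemmas

section Constr
variable {n : ℕ}

def vtx (n : ℕ) (i : Fin (n / 3)) (r : Fin 3) : Fin n :=
  ⟨3 * i.1 + r.1, by
    have h1 := i.2; have h2 := r.2
    have h3 : n / 3 * 3 ≤ n := Nat.div_mul_le_self n 3
    omega⟩

lemma vtx_inj {i j : Fin (n / 3)} {r s : Fin 3} (h : vtx n i r = vtx n j s) :
    i = j ∧ r = s := by
  have h' : 3 * i.1 + r.1 = 3 * j.1 + s.1 := congrArg Fin.val h
  have h2 := r.2; have h3 := s.2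
  constructor <;> [exact Fin.ext (by omega); exact Fin.ext (by omega)]

lemma vtx_ne {i j : Fin (n / 3)} {r s : Fin 3} (h : (i, r) ≠ (j, s)) :
    vtx n i r ≠ vtx n j s := fun he => h (by obtain ⟨h1, h2⟩ := vtx_inj he; rw [h1, h2])

def sFace (n : ℕ) (i : Fin (n / 3)) (r : Fin 3) : Finset (Fin n) := {vtx n i r}

def eFace (n : ℕ) (i : Fin (n / 3)) (r : Fin 3) : Finset (Fin n) :=
  {vtx n i r, vtx n i (r + 1)}

lemma sFace_card (i : Fin (n / 3)) (r : Fin 3) : (sFace n i r).card = 1 :=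
  Finset.card_singleton _

lemma vtx_ne_succ (i : Fin (n / 3)) (r : Fin 3) : vtx n i r ≠ vtx n i (r + 1) :=
  vtx_ne (fun h => (by decide : ∀ r : Fin 3, r ≠ r + 1) r (congrArg Prod.snd h))

lemma eFace_card (i : Fin (n / 3)) (r : Fin 3) : (eFace n i r).card = 2 :=
  Finset.card_pair (vtx_ne_succ i r)

lemma sFace_inj {i j : Fin (n / 3)} {r s : Fin 3} (h : sFace n i r = sFace n j s) :
    i = j ∧ r = s := vtx_inj (Finset.singleton_injective h)

lemma eFace_inj {i j : Fin (n / 3)} {r s : Fin 3} (h : eFace n i r = eFace n j s) :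
    i = j ∧ r = s := by
  have h1 : vtx n i r ∈ eFace n j s := h ▸ (by simp [eFace])
  have h2 : vtx n i (r + 1) ∈ eFace n j s := h ▸ (by simp [eFace])
  simp only [eFace, Finset.mem_insert, Finset.mem_singleton] at h1 h2
  have hij : i = j := by rcases h1 with h1 | h1 <;> exact (vtx_inj h1).1
  have e1 : r = s ∨ r = s + 1 := by
    rcases h1 with h1 | h1 <;> [left; right] <;> exact (vtx_inj h1).2
  have e2 : r + 1 = s ∨ r + 1 = s + 1 := by
    rcases h2 with h2 | h2 <;> [left; right] <;> exact (vtx_inj h2).2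
  exact ⟨hij, (by decide : ∀ r s : Fin 3, (r = s ∨ r = s + 1) →
    (r + 1 = s ∨ r + 1 = s + 1) → r = s) r s e1 e2⟩

lemma eFace_ne_sFace (i j : Fin (n / 3)) (r s : Fin 3) : eFace n i r ≠ sFace n j s := by
  intro h
  have := congrArg Finset.card h
  rw [eFace_card, sFace_card] at this
  omega

def triM (n : ℕ) : Finset (Finset (Fin n) × Finset (Fin n)) :=
  Finset.image (fun p : Fin (n / 3) × Fin 3 => (eFace n p.1 p.2, sFace n p.1 p.2)) Finset.univ

lemma mem_triM {p : Finset (Fin n) × Finset (Fin n)} :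
    p ∈ triM n ↔ ∃ i r, p = (eFace n i r, sFace n i r) := by
  simp only [triM, Finset.mem_image, Finset.mem_univ, true_and, Prod.exists]
  constructor
  · rintro ⟨i, r, h⟩; exact ⟨i, r, h.symm⟩
  · rintro ⟨i, r, h⟩; exact ⟨i, r, h.symm⟩

lemma arc_es (i : Fin (n / 3)) (r : Fin 3) :
    GraphArc (⊤ : SimpleGraph (Fin n)) (eFace n i r) (sFace n i r) :=
  ⟨vtx n i r, vtx n i (r + 1), by simp [vtx_ne_succ i r], rfl, Or.inl rfl⟩

lemma arc_es' (i : Fin (n / 3)) (r : Fin 3) :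
    GraphArc (⊤ : SimpleGraph (Fin n)) (eFace n i r) (sFace n i (r + 1)) :=
  ⟨vtx n i r, vtx n i (r + 1), by simp [vtx_ne_succ i r], rfl, Or.inr rfl⟩

lemma triM_isMatching : IsMatching (GraphArc (⊤ : SimpleGraph (Fin n))) (triM n) := by
  constructor
  · intro p hp
    obtain ⟨i, r, rfl⟩ := mem_triM.1 hp
    exact arc_es i r
  · intro p hp q hq hpq
    obtain ⟨i, r, rfl⟩ := mem_triM.1 hp
    obtain ⟨j, s, rfl⟩ := mem_triM.1 hq
    have hne : ¬(i = j ∧ r = s) := by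
      rintro ⟨rfl, rfl⟩; exact hpq rfl
    refine ⟨?_, ?_, ?_, ?_⟩
    · intro h; exact hne (eFace_inj h)
    · exact eFace_ne_sFace i j r s
    · exact (eFace_ne_sFace j i s r).symm
    · intro h; exact hne (sFace_inj h)

end Constr

section Cycle2
variable {V : Type*} [DecidableEq V] {G : SimpleGraph V} {m : Finset (Finset V × Finset V)}

lemma cycle_exists_singleton {l : List (Finset V)}
    (hl : IsCycleList (MStep (GraphArc G) m) l) : ∃ τ ∈ l, τ.card = 1 := by
  cases l with
  | nil => exact absurd hl id
  | cons a t =>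
    obtain ⟨hnd, hch⟩ := hl
    cases t with
    | nil => exact absurd rfl (mstep_ne (List.isChain_pair.1 hch))
    | cons b t' =>
      have hab := (List.chain_cons.1 hch).1
      rcases mstep_cases hab with ⟨_, hb1, _, _⟩ | ⟨ha1, _, _, _⟩
      · exact ⟨b, List.mem_cons_of_mem _ List.mem_cons_self, hb1⟩
      · exact ⟨a, List.mem_cons_self, ha1⟩

lemma cycle_exists_matched_singleton {l : List (Finset V)}
    (hl : IsCycleList (MStep (GraphArc G) m) l) :
    ∃ τ x, τ ∈ l ∧ τ.card = 1 ∧ (x, τ) ∈ m := by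
  obtain ⟨τ, hτl, hτ1⟩ := cycle_exists_singleton hl
  cases l with
  | nil => exact absurd hl id
  | cons a t =>
    obtain ⟨hnd, hch⟩ := hl
    obtain ⟨w, hw⟩ := cycle_mem_rel t a a hch τ hτl
    rcases mstep_cases hw with ⟨h2, _, _, _⟩ | ⟨_, _, _, hmm⟩
    · omega
    · exact ⟨τ, w, hτl, hτ1, hmm⟩

end Cycle2

section Constr2
variable {n : ℕ}

def triL (n : ℕ) (i : Fin (n / 3)) : List (Finset (Fin n)) :=
  [sFace n i 0, eFace n i 0, sFace n i 1, eFace n i 1, sFace n i 2, eFace n i 2]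

lemma not_mem_triM_es' (i : Fin (n / 3)) (r : Fin 3) :
    (eFace n i r, sFace n i (r + 1)) ∉ triM n := by
  intro h
  obtain ⟨j, s, heq⟩ := mem_triM.1 h
  rw [Prod.ext_iff] at heq
  obtain ⟨h1, h2⟩ := heq
  have e1 := (eFace_inj h1).2
  have e2 := (sFace_inj h2).2
  subst e1
  exact (by decide : ∀ r : Fin 3, r + 1 ≠ r) r e2

lemma step_s_e (i : Fin (n / 3)) (r : Fin 3) :
    MStep (GraphArc (⊤ : SimpleGraph (Fin n))) (triM n) (sFace n i r) (eFace n i r) :=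
  Or.inr ⟨arc_es i r, mem_triM.2 ⟨i, r, rfl⟩⟩

lemma step_e_s' (i : Fin (n / 3)) (r : Fin 3) :
    MStep (GraphArc (⊤ : SimpleGraph (Fin n))) (triM n) (eFace n i r) (sFace n i (r + 1)) :=
  Or.inl ⟨arc_es' i r, not_mem_triM_es' i r⟩

lemma triL_cycle (i : Fin (n / 3)) :
    IsCycleList (MStep (GraphArc (⊤ : SimpleGraph (Fin n))) (triM n)) (triL n i) := by
  rw [triL]
  refine ⟨?_, ?_⟩
  · simp only [List.nodup_cons, List.mem_cons, List.not_mem_nil, List.mem_singleton,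
      or_false, List.nodup_nil, and_true, not_or]
    and_intros <;> intro h
    all_goals first
      | exact h
      | exact absurd (sFace_inj h).2 (by decide)
      | exact absurd (eFace_inj h).2 (by decide)
      | exact eFace_ne_sFace _ _ _ _ h
      | exact eFace_ne_sFace _ _ _ _ h.symm
  · show List.Chain _ _ _
    refine List.Chain.cons (step_s_e i 0) (List.Chain.cons ?_ (List.Chain.cons (step_s_e i 1)
      (List.Chain.cons ?_ (List.Chain.cons (step_s_e i 2)
      (List.Chain.cons ?_ List.Chain.nil)))))
    · have := step_e_s' i 0; rwa [show (0 : Fin 3) + 1 = 1 by decide] at this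
    · have := step_e_s' i 1; rwa [show (1 : Fin 3) + 1 = 2 by decide] at this
    · have := step_e_s' i 2; rwa [show (2 : Fin 3) + 1 = 0 by decide] at this

lemma cyclesOf_triM_sub {l : List (Finset (Fin n))}
    (hl : IsCycleList (MStep (GraphArc (⊤ : SimpleGraph (Fin n))) (triM n)) l) :
    ∃ i, l.IsRotated (triL n i) := by
  obtain ⟨τ, x, hτl, hτ1, hxm⟩ := cycle_exists_matched_singleton hl
  obtain ⟨i, r, heq⟩ := mem_triM.1 hxm
  rw [Prod.ext_iff] at heq
  obtain ⟨hx, hτ⟩ := heq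
  subst hτ
  have hτL : sFace n i r ∈ triL n i := by fin_cases r <;> simp [triL]
  exact ⟨i, cycle_isRotated_of_mem (mstep_det triM_isMatching) hl (triL_cycle i) hτl hτL⟩

lemma image_cyclesOf_triM :
    Quotient.mk (List.IsRotated.setoid (Finset (Fin n))) ''
        cyclesOf (GraphArc (⊤ : SimpleGraph (Fin n))) (triM n)
      = Set.range (fun i : Fin (n / 3) =>
          Quotient.mk (List.IsRotated.setoid (Finset (Fin n))) (triL n i)) := by
  ext q
  simp only [Set.mem_image, Set.mem_range]
  constructor
  · rintro ⟨l, hl, rfl⟩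
    obtain ⟨i, hrot⟩ := cyclesOf_triM_sub hl
    exact ⟨i, (Quotient.sound hrot).symm⟩
  · rintro ⟨i, rfl⟩
    exact ⟨triL n i, triL_cycle i, rfl⟩

lemma triL_quot_inj : Function.Injective (fun i : Fin (n / 3) =>
    Quotient.mk (List.IsRotated.setoid (Finset (Fin n))) (triL n i)) := by
  intro i j h
  have hrot : (triL n i).IsRotated (triL n j) := Quotient.exact h
  have hmem : sFace n i 0 ∈ triL n j := hrot.perm.mem_iff.1 (by simp [triL])
  simp only [triL, List.mem_cons, List.not_mem_nil, or_false, List.mem_singleton] at hmem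
  rcases hmem with h' | h' | h' | h' | h' | h'
  · exact (sFace_inj h').1
  · exact ((eFace_ne_sFace _ _ _ _ h'.symm).elim)
  · exact (sFace_inj h').1
  · exact ((eFace_ne_sFace _ _ _ _ h'.symm).elim)
  · exact (sFace_inj h').1
  · exact ((eFace_ne_sFace _ _ _ _ h'.symm).elim)

lemma numCycles_triM :
    numCycles (GraphArc (⊤ : SimpleGraph (Fin n))) (triM n) = n / 3 := by
  rw [numCycles, image_cyclesOf_triM, ← Set.image_univ,
    Set.ncard_image_of_injective _ triL_quot_inj, Set.ncard_univ,
    Nat.card_eq_fintype_card, Fintype.card_fin]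

end Constr2

section Upper2
variable {V : Type*} [DecidableEq V] {G : SimpleGraph V} {m : Finset (Finset V × Finset V)}

def vertsOf (l : List (Finset V)) : Finset V :=
  (l.toFinset.filter (fun f => f.card = 1)).biUnion id

lemma mem_vertsOf {l : List (Finset V)} {u : V} :
    u ∈ vertsOf l ↔ ({u} : Finset V) ∈ l := by
  simp only [vertsOf, Finset.mem_biUnion, Finset.mem_filter, List.mem_toFinset, id]
  constructor
  · rintro ⟨f, ⟨hfl, hf1⟩, hu⟩
    obtain ⟨x, rfl⟩ := Finset.card_eq_one.1 hf1
    rw [Finset.mem_singleton] at hu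
    subst hu
    exact hfl
  · intro h
    exact ⟨{u}, ⟨h, Finset.card_singleton u⟩, Finset.mem_singleton_self u⟩

lemma head_singleton_three {τ : Finset V} {rest : List (Finset V)}
    (h : IsCycleList (MStep (GraphArc G) m) (τ :: rest)) (hτ1 : τ.card = 1) :
    ∃ u1 u2 u3 : V, u1 ≠ u2 ∧ u1 ≠ u3 ∧ u2 ≠ u3 ∧
      ({u1} : Finset V) ∈ τ :: rest ∧ ({u2} : Finset V) ∈ τ :: rest ∧
      ({u3} : Finset V) ∈ τ :: rest := by
  obtain ⟨hnd, hch⟩ := h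
  rcases rest with _ | ⟨x1, rest2⟩
  · exact absurd rfl (mstep_ne (List.isChain_pair.1 hch))
  obtain ⟨h1, hch⟩ := List.chain_cons.1 hch
  rcases mstep_cases h1 with ⟨h2, _, _, _⟩ | ⟨_, hx12, hτx1, hm1⟩
  · omega
  rcases rest2 with _ | ⟨τ2, rest3⟩
  · have h2 := List.isChain_pair.1 hch
    rcases mstep_cases h2 with ⟨_, _, _, hnm⟩ | ⟨hc1, _, _, _⟩
    · exact absurd hm1 hnm
    · omega
  obtain ⟨h2, hch⟩ := List.chain_cons.1 hch
  rcases mstep_cases h2 with ⟨_, hτ21, hτ2x1, hnm2⟩ | ⟨hx11, _, _, _⟩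
  swap
  · omega
  rcases rest3 with _ | ⟨x2, rest4⟩
  · have h3 := List.isChain_pair.1 hch
    rcases mstep_cases h3 with ⟨hc2, _, _, _⟩ | ⟨_, hc2, _, _⟩ <;> omega
  obtain ⟨h3, hch⟩ := List.chain_cons.1 hch
  rcases mstep_cases h3 with ⟨hc2, _, _, _⟩ | ⟨_, hx22, hτ2x2, hm2⟩
  · omega
  rcases rest4 with _ | ⟨τ3, rest5⟩
  · -- length-4 cycle: impossible
    exfalso
    have h4 := List.isChain_pair.1 hch
    rcases mstep_cases h4 with ⟨_, _, hτx2, _⟩ | ⟨hc, _, _, _⟩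
    swap
    · omega
    obtain ⟨u1, rfl⟩ := Finset.card_eq_one.1 hτ1
    obtain ⟨u2, rfl⟩ := Finset.card_eq_one.1 hτ21
    simp only [List.nodup_cons, List.mem_cons, List.not_mem_nil, List.mem_singleton,
      or_false, not_or, List.nodup_nil, and_true] at hnd
    obtain ⟨⟨hτx1', hττ2, hτx2'⟩, ⟨hx1τ2, hx1x2⟩, hτ2x2', _⟩ := hnd
    have hu12 : u1 ≠ u2 := fun he => hττ2 (by rw [he])
    have hsub1 : ({u1, u2} : Finset V) ⊆ x1 :=
      Finset.insert_subset (Finset.singleton_subset_iff.1 hτx1)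
        (by simpa [Finset.singleton_subset_iff] using hτ2x1)
    have hsub2 : ({u1, u2} : Finset V) ⊆ x2 :=
      Finset.insert_subset (Finset.singleton_subset_iff.1 hτx2)
        (by simpa [Finset.singleton_subset_iff] using hτ2x2)
    have he1 : ({u1, u2} : Finset V) = x1 :=
      Finset.eq_of_subset_of_card_le hsub1 (by rw [hx12, Finset.card_pair hu12])
    have he2 : ({u1, u2} : Finset V) = x2 :=
      Finset.eq_of_subset_of_card_le hsub2 (by rw [hx22, Finset.card_pair hu12])
    exact hx1x2 (he1 ▸ he2)
  obtain ⟨h4, _⟩ := List.chain_cons.1 hch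
  rcases mstep_cases h4 with ⟨_, hτ31, _, _⟩ | ⟨hc, _, _, _⟩
  swap
  · omega
  obtain ⟨u1, rfl⟩ := Finset.card_eq_one.1 hτ1
  obtain ⟨u2, rfl⟩ := Finset.card_eq_one.1 hτ21
  obtain ⟨u3, rfl⟩ := Finset.card_eq_one.1 hτ31
  simp only [List.nodup_cons, List.mem_cons, not_or] at hnd
  obtain ⟨⟨_, hττ2, _, hττ3, _⟩, ⟨_, _, _, _⟩, ⟨_, hτ2τ3, _⟩, _⟩ := hnd
  refine ⟨u1, u2, u3, ?_, ?_, ?_, ?_, ?_, ?_⟩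
  · exact fun he => hττ2 (by rw [he])
  · exact fun he => hττ3 (by rw [he])
  · exact fun he => hτ2τ3 (by rw [he])
  · exact List.mem_cons_self
  · simp
  · simp

lemma cycle_three_singletons {l : List (Finset V)}
    (hl : IsCycleList (MStep (GraphArc G) m) l) :
    ∃ u1 u2 u3 : V, u1 ≠ u2 ∧ u1 ≠ u3 ∧ u2 ≠ u3 ∧
      ({u1} : Finset V) ∈ l ∧ ({u2} : Finset V) ∈ l ∧ ({u3} : Finset V) ∈ l := by
  obtain ⟨τ, hτl, hτ1⟩ := cycle_exists_singleton hl
  obtain ⟨s1, t1, rfl⟩ := List.append_of_mem hτl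
  have hrot : (s1 ++ τ :: t1).IsRotated (τ :: (t1 ++ s1)) := by
    simpa using (List.isRotated_append (l := s1) (l' := τ :: t1))
  have hl' := isCycleList_of_isRotated hl hrot
  obtain ⟨u1, u2, u3, h12, h13, h23, m1, m2, m3⟩ := head_singleton_three hl' hτ1
  exact ⟨u1, u2, u3, h12, h13, h23, hrot.perm.mem_iff.2 m1, hrot.perm.mem_iff.2 m2,
    hrot.perm.mem_iff.2 m3⟩

lemma three_le_vertsOf_card {l : List (Finset V)}
    (hl : IsCycleList (MStep (GraphArc G) m) l) : 3 ≤ (vertsOf l).card := by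
  obtain ⟨u1, u2, u3, h12, h13, h23, m1, m2, m3⟩ := cycle_three_singletons hl
  have hsub : ({u1, u2, u3} : Finset V) ⊆ vertsOf l := by
    intro x hx
    simp only [Finset.mem_insert, Finset.mem_singleton] at hx
    rcases hx with rfl | rfl | rfl <;> exact mem_vertsOf.2 (by assumption)
  calc (3 : ℕ) = ({u1, u2, u3} : Finset V).card := by
        rw [Finset.card_insert_of_notMem (by simp [h12, h13]),
          Finset.card_insert_of_notMem (by simp [h23]), Finset.card_singleton]
    _ ≤ _ := Finset.card_le_card hsub

lemma part2_upper [Fintype V] (hm : IsMatching (GraphArc G) m) :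
    numCycles (GraphArc G) m ≤ Fintype.card V / 3 := by
  classical
  have hfin : (cyclesOf (GraphArc G) m).Finite := by
    apply (List.finite_length_le (Finset V) (Fintype.card (Finset V))).subset
    rintro l hl
    cases l with
    | nil => exact absurd hl id
    | cons a t => exact hl.1.length_le_card
  have hfin2 := hfin.image (Quotient.mk (List.IsRotated.setoid (Finset V)))
  rw [numCycles, Set.ncard_eq_toFinset_card _ hfin2]
  set F := hfin2.toFinset with hF
  have hout : ∀ q ∈ F, (Quotient.out q) ∈ cyclesOf (GraphArc G) m := by
    intro q hq
    rw [hF, Set.Finite.mem_toFinset] at hq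
    obtain ⟨l, hl, rfl⟩ := hq
    have hr : (Quotient.out (Quotient.mk (List.IsRotated.setoid (Finset V)) l)).IsRotated l :=
      (@Quotient.eq _ (List.IsRotated.setoid (Finset V)) _ _).1 (Quotient.out_eq _)
    exact isCycleList_of_isRotated hl hr.symm
  rw [Nat.le_div_iff_mul_le (by norm_num : 0 < 3)]
  set ψ : Quotient (List.IsRotated.setoid (Finset V)) → Finset V :=
    fun q => vertsOf (Quotient.out q) with hψ
  have hdisj : ∀ q ∈ F, ∀ q' ∈ F, q ≠ q' → Disjoint (ψ q) (ψ q') := by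
    intro q hq q' hq' hne
    rw [Finset.disjoint_left]
    intro u hu hu'
    have h1 := mem_vertsOf.1 hu
    have h2 := mem_vertsOf.1 hu'
    have hr := cycle_isRotated_of_mem (mstep_det hm) (hout q hq) (hout q' hq') h1 h2
    exact hne (by rw [← Quotient.out_eq q, ← Quotient.out_eq q']; exact Quotient.sound hr)
  calc F.card * 3 = ∑ _q ∈ F, 3 := by rw [Finset.sum_const, smul_eq_mul]
    _ ≤ ∑ q ∈ F, (ψ q).card := Finset.sum_le_sum (fun q hq => three_le_vertsOf_card (hout q hq))
    _ = (F.biUnion ψ).card := (Finset.card_biUnion hdisj).symm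
    _ ≤ Fintype.card V := Finset.card_le_univ _

end Upper2

section Walks
variable {n : ℕ}

lemma adjv (i : Fin (n / 3)) (r s : Fin 3) (h : r ≠ s) :
    (⊤ : SimpleGraph (Fin n)).Adj (vtx n i r) (vtx n i s) := by
  rw [SimpleGraph.top_adj]
  exact vtx_ne (fun he => h (congrArg Prod.snd he))

def triWalk (n : ℕ) (i : Fin (n / 3)) :
    (⊤ : SimpleGraph (Fin n)).Walk (vtx n i 0) (vtx n i 0) :=
  .cons (adjv i 0 1 (by decide)) (.cons (adjv i 1 2 (by decide))
    (.cons (adjv i 2 0 (by decide)) .nil))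

lemma triWalk_support (i : Fin (n / 3)) :
    (triWalk n i).support = [vtx n i 0, vtx n i 1, vtx n i 2, vtx n i 0] := by
  simp [triWalk]

lemma triWalk_isCycle (i : Fin (n / 3)) : (triWalk n i).IsCycle := by
  have h01 : vtx n i 0 ≠ vtx n i 1 := vtx_ne (by simp)
  have h02 : vtx n i 0 ≠ vtx n i 2 := vtx_ne (by simp)
  have h12 : vtx n i 1 ≠ vtx n i 2 := vtx_ne (by simp)
  rw [SimpleGraph.Walk.isCycle_def]
  refine ⟨?_, ?_, ?_⟩
  · rw [SimpleGraph.Walk.isTrail_def]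
    simp [triWalk, Sym2.eq_iff, h01, h02, h12, h01.symm, h02.symm, h12.symm]
  · simp [triWalk]
  · rw [triWalk_support]
    simp [h12, h01.symm, h02.symm]

lemma part1_mem_aux (i j : Fin (n / 3)) (hij : i ≠ j) (x : Fin n)
    (hx : x ∈ (triWalk n i).support) : x ∉ (triWalk n j).support := by
  rw [triWalk_support] at hx ⊢
  simp only [List.mem_cons, List.not_mem_nil, or_false] at hx ⊢
  intro hx'
  obtain (rfl | rfl | rfl) : x = vtx n i 0 ∨ x = vtx n i 1 ∨ x = vtx n i 2 := by tauto
  all_goals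
    rcases hx' with h | h | h | h <;> exact hij ((vtx_inj h).1)

lemma part1_upper {k : ℕ} (v : Fin k → Fin n)
    (w : ∀ i, (⊤ : SimpleGraph (Fin n)).Walk (v i) (v i))
    (hc : ∀ i, (w i).IsCycle)
    (hd : ∀ i j, i ≠ j → ∀ x, x ∈ (w i).support → x ∉ (w j).support) : k ≤ n / 3 := by
  rw [Nat.le_div_iff_mul_le (by norm_num : 0 < 3)]
  classical
  set S : Fin k → Finset (Fin n) := fun i => (w i).support.toFinset with hS
  have hcard : ∀ i, 3 ≤ (S i).card := by
    intro i
    have h3 : 3 ≤ (w i).length := (hc i).three_le_length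
    have hnd : (w i).support.tail.Nodup := (hc i).support_nodup
    have hlen : (w i).support.tail.length = (w i).length := by
      rw [List.length_tail, SimpleGraph.Walk.length_support]
      omega
    calc (3 : ℕ) ≤ (w i).support.tail.length := by omega
      _ = (w i).support.tail.toFinset.card := (List.toFinset_card_of_nodup hnd).symm
      _ ≤ (S i).card := Finset.card_le_card (fun x hx => by
          rw [List.mem_toFinset] at hx
          rw [hS, List.mem_toFinset]
          exact List.mem_of_mem_tail hx)
  have hdisj : ∀ a ∈ Finset.univ, ∀ b ∈ Finset.univ, a ≠ b → Disjoint (S a) (S b) := by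
    intro a _ b _ hab
    rw [Finset.disjoint_left]
    intro x hx hx'
    rw [hS, List.mem_toFinset] at hx hx'
    exact hd a b hab x hx hx'
  calc k * 3 = ∑ _i : Fin k, 3 := by
        rw [Finset.sum_const, Finset.card_univ, Fintype.card_fin, smul_eq_mul]
    _ ≤ ∑ i, (S i).card := Finset.sum_le_sum (fun i _ => hcard i)
    _ = (Finset.univ.biUnion S).card := (Finset.card_biUnion hdisj).symm
    _ ≤ Fintype.card (Fin n) := Finset.card_le_univ _
    _ = n := Fintype.card_fin n

end Walks

lemma nat_sSup_eq {S : Set ℕ} {a : ℕ} (h1 : a ∈ S) (h2 : ∀ b ∈ S, b ≤ a) : sSup S = a :=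
  le_antisymm (csSup_le ⟨a, h1⟩ h2) (le_csSup ⟨a, fun b hb => h2 b hb⟩ h1)


/-- the maximum number of pairwise vertex-disjoint cycles in the complete
graph `K_n` equals `⌊n/3⌋`; equivalently `η(K_n) = ⌊n/3⌋`. -/
theorem eta_complete_graph (n : ℕ) :
    sSup {k : ℕ | ∃ (v : Fin k → Fin n)
        (w : ∀ i, (⊤ : SimpleGraph (Fin n)).Walk (v i) (v i)),
        (∀ i, (w i).IsCycle) ∧
        ∀ i j, i ≠ j → ∀ x : Fin n, x ∈ (w i).support → x ∉ (w j).support} = n / 3 ∧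
    sSup {k : ℕ | ∃ m : Finset (Finset (Fin n) × Finset (Fin n)),
        IsMatching (GraphArc (⊤ : SimpleGraph (Fin n))) m ∧
        numCycles (GraphArc (⊤ : SimpleGraph (Fin n))) m = k} = n / 3 := by
  constructor
  · refine nat_sSup_eq ?_ ?_
    · exact ⟨fun i => vtx n i 0, triWalk n, triWalk_isCycle, part1_mem_aux⟩
    · rintro b ⟨v, w, hc, hd⟩
      exact part1_upper v w hc hd
  · refine nat_sSup_eq ?_ ?_
    · exact ⟨triM n, triM_isMatching, numCycles_triM⟩
    · rintro b ⟨m, hm, rfl⟩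
      have := part2_upper hm
      rwa [Fintype.card_fin] at this
end
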